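/- For every n ≥ 0, the term B^n B is βη-equivalent to λx1.…λx_{n+3}. x1 x2 … x_{n+1} (x_{n+2} x_{n+3}). -/

import Mathlib

/-- Untyped lambda terms in de Bruijn representation. -/
inductive Lam where
  | var : Nat → Lam
  | app : Lam → Lam → Lam
  | lam : Lam → Lam
deriving DecidableEq

namespace Lam

/-- Lift (shift by one) all free variables with index ≥ `c`. -/
def lift (c : Nat) : Lam → Lam
  | var n => if n < c then var n else var (n + 1)
  | app a b => app (lift c a) (lift c b)
  | lam a => lam (lift (c + 1) a)

/-- Substitute `s` for the free variable with index `d`. -/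
def subst (d : Nat) (s : Lam) : Lam → Lam
  | var n => if n = d then s else if d < n then var (n - 1) else var n
  | app a b => app (subst d s a) (subst d s b)
  | lam a => lam (subst (d + 1) (lift 0 s) a)

/-- One-step βη-reduction (compatible closure of β and η). -/
inductive Step : Lam → Lam → Prop
  | beta (a b : Lam) : Step (app (lam a) b) (subst 0 b a)
  | eta (a : Lam) : Step (lam (app (lift 0 a) (var 0))) a
  | appL {a a' : Lam} (b : Lam) : Step a a' → Step (app a b) (app a' b)
  | appR (a : Lam) {b b' : Lam} : Step b b' → Step (app a b) (app a b')
  | xi {a a' : Lam} : Step a a' → Step (lam a) (lam a')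

/-- βη-equivalence: the equivalence relation generated by one-step βη-reduction. -/
def BetaEtaEq (a b : Lam) : Prop := Relation.EqvGen Step a b

/-- The B combinator λf.λg.λx. f (g x). -/
def B : Lam := lam (lam (lam (app (var 2) (app (var 1) (var 0)))))

/-- `flat X n` is the (n+1)-fold flat left application, i.e. `X_(n+1)`:
`flat X 0 = X = X_(1)` and `flat X (n+1) = (flat X n) X = X_(n+2)`. -/
def flat (X : Lam) : Nat → Lam
  | 0 => X
  | n + 1 => app (flat X n) X

end Lam

open Lam

/-- `bpow k e` is the k-fold application B (B (… (B e)…)). -/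
def bpow : ℕ → Lam → Lam
  | 0, e => e
  | k + 1, e => app B (bpow k e)

/-- k-fold lambda abstraction. -/
def lams : ℕ → Lam → Lam
  | 0, t => t
  | k + 1, t => lam (lams k t)

/-- `spine top k` is the left-nested application (var top) (var (top-1)) … (var (top-k)). -/
def spine (top : ℕ) : ℕ → Lam
  | 0 => var top
  | k + 1 => app (spine top k) (var (top - (k + 1)))

/-- iterated lift at cutoff 0. -/
def liftn : ℕ → Lam → Lam
  | 0, s => s
  | k + 1, s => liftn k (lift 0 s)

lemma liftn_app (k : ℕ) (a b : Lam) : liftn k (app a b) = app (liftn k a) (liftn k b) := by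
  induction k generalizing a b with
  | zero => rfl
  | succ k ih => simp [liftn, lift, ih]

lemma liftn_var (k m : ℕ) : liftn k (var m) = var (m + k) := by
  induction k generalizing m with
  | zero => rfl
  | succ k ih => simp [liftn, lift, ih]; omega

lemma lift_lams (c k : ℕ) (t : Lam) : lift c (lams k t) = lams k (lift (c + k) t) := by
  induction k generalizing c with
  | zero => rfl
  | succ k ih =>
    simp only [lams, lift, ih]
    have h : c + 1 + k = c + (k + 1) := by omega
    rw [h]

lemma lift_spine (c top k : ℕ) (h : top < c) : lift c (spine top k) = spine top k := by
  induction k with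
  | zero => simp [spine, lift, h]
  | succ k ih =>
    simp only [spine, lift, ih]
    rw [if_pos (by omega)]

lemma subst_lams (d k : ℕ) (s t : Lam) :
    subst d s (lams k t) = lams k (subst (d + k) (liftn k s) t) := by
  induction k generalizing d s with
  | zero => rfl
  | succ k ih =>
    simp only [lams, subst, ih, liftn]
    have h : d + 1 + k = d + (k + 1) := by omega
    rw [h]

lemma subst_spine (top k : ℕ) (h : 0 < top) :
    subst top (app (var (top + 1)) (var top)) (spine top k) = spine (top + 1) (k + 1) := by
  induction k with
  | zero => simp [spine, subst]
  | succ k ih =>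
    simp only [spine, subst, ih]
    rw [if_neg (by omega), if_neg (by omega)]
    have : top + 1 - (k + 1 + 1) = top - (k + 1) := by omega
    rw [this]

lemma eqv_appR (a : Lam) {b b' : Lam} (h : BetaEtaEq b b') : BetaEtaEq (app a b) (app a b') := by
  induction h with
  | rel x y h => exact Relation.EqvGen.rel _ _ (Step.appR a h)
  | refl x => exact Relation.EqvGen.refl _
  | symm x y _ ih => exact Relation.EqvGen.symm _ _ ih
  | trans x y z _ _ ih1 ih2 => exact Relation.EqvGen.trans _ _ _ ih1 ih2

lemma eqv_xi {a a' : Lam} (h : BetaEtaEq a a') : BetaEtaEq (lam a) (lam a') := by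
  induction h with
  | rel x y h => exact Relation.EqvGen.rel _ _ (Step.xi h)
  | refl x => exact Relation.EqvGen.refl _
  | symm x y _ ih => exact Relation.EqvGen.symm _ _ ih
  | trans x y z _ _ ih1 ih2 => exact Relation.EqvGen.trans _ _ _ ih1 ih2

lemma lift_T (n : ℕ) :
    lift 0 (lams (n + 3) (app (spine (n + 2) n) (app (var 1) (var 0))))
      = lams (n + 3) (app (spine (n + 2) n) (app (var 1) (var 0))) := by
  rw [lift_lams]
  simp only [lift, zero_add]
  rw [lift_spine _ _ _ (by omega), if_pos (by omega), if_pos (by omega)]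

lemma key_step (n : ℕ) :
    BetaEtaEq
      (app B (lams (n + 3) (app (spine (n + 2) n) (app (var 1) (var 0)))))
      (lams (n + 4) (app (spine (n + 3) (n + 1)) (app (var 1) (var 0)))) := by
  set T := lams (n + 3) (app (spine (n + 2) n) (app (var 1) (var 0))) with hT
  -- first beta step
  have h1 : Step (app B T)
      (lam (lam (app T (app (var 1) (var 0))))) := by
    have := Step.beta (lam (lam (app (var 2) (app (var 1) (var 0))))) T
    have hL : lift 0 T = T := by rw [hT]; exact lift_T n
    simpa [subst, hL, B] using this
  -- second beta step, under two lambdas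
  have h2 : Step (app T (app (var 1) (var 0)))
      (lams (n + 2) (app (spine (n + 3) (n + 1)) (app (var 1) (var 0)))) := by
    have hT' : T = lam (lams (n + 2) (app (spine (n + 2) n) (app (var 1) (var 0)))) := by
      rw [hT]; rfl
    rw [hT']
    have := Step.beta (lams (n + 2) (app (spine (n + 2) n) (app (var 1) (var 0))))
      (app (var 1) (var 0))
    have hs : subst 0 (app (var 1) (var 0))
        (lams (n + 2) (app (spine (n + 2) n) (app (var 1) (var 0))))
        = lams (n + 2) (app (spine (n + 3) (n + 1)) (app (var 1) (var 0))) := by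
      rw [subst_lams]
      simp only [zero_add, liftn_app, liftn_var, subst]
      rw [if_neg (by omega), if_neg (by omega), if_neg (by omega), if_neg (by omega)]
      have : (1 : ℕ) + (n + 2) = n + 2 + 1 := by omega
      rw [this, subst_spine _ _ (by omega)]
    rw [hs] at this
    exact this
  refine Relation.EqvGen.trans _ _ _ (Relation.EqvGen.rel _ _ h1) ?_
  have : lams (n + 4) (app (spine (n + 3) (n + 1)) (app (var 1) (var 0)))
      = lam (lam (lams (n + 2) (app (spine (n + 3) (n + 1)) (app (var 1) (var 0))))) := rfl
  rw [this]
  exact eqv_xi (eqv_xi (Relation.EqvGen.rel _ _ h2))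

/-- For every n ≥ 0, B^n B is βη-equivalent to
λx1.…λx_{n+3}. x1 x2 … x_{n+1} (x_{n+2} x_{n+3}). -/
theorem stmt15 (n : ℕ) :
    BetaEtaEq (bpow n B)
      (lams (n + 3) (app (spine (n + 2) n) (app (var 1) (var 0)))) := by
  induction n with
  | zero => exact Relation.EqvGen.refl _
  | succ n ih =>
    refine Relation.EqvGen.trans _ _ _ (eqv_appR B ih) ?_
    have := key_step n
    have e : n + 1 + 3 = n + 4 := by omega
    have e2 : n + 1 + 2 = n + 3 := by omega
    rw [e, e2]
    exact this
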